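/- arXiv:2310.08774 — 4 statements merged into one kernel-verified Lean document; each statement's English description precedes it below -/
import Mathlib

section
/- In a finite directed acyclic graph with a unique source s_0, a nonempty set of sinks X, and a strictly positive reward R on X, fixing any backward policy P_B (a family of full-support distributions over the parents of each non-source state), there exists a unique forward policy P_F (distributions over children of each non-sink state) and a unique positive scalar Z such that Z·∏_i P_F(s_{i+1}|s_i) = R(x)·P_B(τ|x) for every complete trajectory τ = (s_0 → ... → x); moreover at this solution Z = Σ_{x∈X} R(x) and the marginal probability of terminating at x under P_F equals R(x)/Z. -/
variable {S : Type}

/-- A terminal state (sink) of the DAG. -/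
def IsSink (adj : S → S → Prop) (x : S) : Prop := ∀ y, ¬ adj x y

/-- Product of transition probabilities along a list of states. -/
def fwdProd (P : S → S → ℝ) : List S → ℝ
  | a :: b :: rest => P a b * fwdProd P (b :: rest)
  | _ => 1

/-- `P_B(τ|x)`: product of backward transition probabilities along a trajectory,
where `PB s' s` is the probability of parent `s` given state `s'`. -/
def bwdProd (PB : S → S → ℝ) (L : List S) : ℝ := fwdProd (fun a b => PB b a) L

/-- A complete trajectory: starts at `s0`, follows edges, and ends at a sink. -/
def IsCompleteTraj (adj : S → S → Prop) (s0 : S) (L : List S) : Prop :=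
  L.head? = some s0 ∧ L.Chain' adj ∧ ∃ x, L.getLast? = some x ∧ IsSink adj x

def trajEnd (s0 : S) (L : List S) : S := L.getLast?.getD s0

/-- Marginal terminating probability at `x`: sum of `P_F(τ)` over complete trajectories
ending at `x`. -/
noncomputable def PFtop (adj : S → S → Prop) (s0 : S) (PF : S → S → ℝ) (x : S) : ℝ :=
  ∑ᶠ L ∈ {L : List S | IsCompleteTraj adj s0 L ∧ L.getLast? = some x}, fwdProd PF L

/-- A forward policy: distributions over children of non-sink states. -/
def IsFwdPolicy [Fintype S] (adj : S → S → Prop) (PF : S → S → ℝ) : Prop :=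
  (∀ s s', 0 ≤ PF s s') ∧ (∀ s s', ¬ adj s s' → PF s s' = 0) ∧
  (∀ s, ¬ IsSink adj s → ∑ s', PF s s' = 1)

/-- A backward policy: distributions over parents of non-initial states
(`PB s' s` = probability of parent `s` given `s'`). -/
def IsBwdPolicy [Fintype S] (adj : S → S → Prop) (s0 : S) (PB : S → S → ℝ) : Prop :=
  (∀ s s', 0 ≤ PB s' s) ∧ (∀ s s', ¬ adj s s' → PB s' s = 0) ∧
  (∀ s', s' ≠ s0 → ∑ s, PB s' s = 1)

def FullSupportBwd (adj : S → S → Prop) (PB : S → S → ℝ) : Prop :=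
  ∀ s s', adj s s' → 0 < PB s' s

section Helpers
open scoped Classical

lemma fwdProd_nil (P : S → S → ℝ) : fwdProd P [] = 1 := rfl
lemma fwdProd_singleton (P : S → S → ℝ) (a : S) : fwdProd P [a] = 1 := rfl
lemma fwdProd_cons_cons (P : S → S → ℝ) (a b : S) (t : List S) :
    fwdProd P (a :: b :: t) = P a b * fwdProd P (b :: t) := rfl

lemma fwdProd_append (P : S → S → ℝ) :
    ∀ (L : List S) (s : S), L.getLast? = some s →
      ∀ M : List S, fwdProd P (L ++ M) = fwdProd P L * fwdProd P (s :: M)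
  | [], s, h, M => by simp at h
  | [a], s, h, M => by
      obtain rfl : a = s := by simpa using h
      simp [fwdProd_singleton]
  | a :: b :: t, s, h, M => by
      have h' : (b :: t).getLast? = some s := by
        rwa [List.getLast?_cons_cons] at h
      have IH := fwdProd_append P (b :: t) s h' M
      show P a b * fwdProd P (b :: (t ++ M)) = P a b * fwdProd P (b :: t) * fwdProd P (s :: M)
      rw [show (b :: (t ++ M)) = (b :: t) ++ M from rfl, IH]; ring

lemma fwdProd_reverse (P : S → S → ℝ) :
    ∀ L : List S, fwdProd P L.reverse = fwdProd (fun a b => P b a) L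
  | [] => rfl
  | [a] => rfl
  | a :: b :: t => by
      have h : (b :: t).reverse.getLast? = some b := by
        rw [List.getLast?_reverse]; rfl
      rw [List.reverse_cons, fwdProd_append P _ b h [a], fwdProd_reverse P (b :: t),
        fwdProd_cons_cons, fwdProd_cons_cons, fwdProd_singleton]
      ring

lemma fwdProd_nonneg (P : S → S → ℝ) (hP : ∀ a b, 0 ≤ P a b) :
    ∀ L : List S, 0 ≤ fwdProd P L
  | [] => zero_le_one
  | [_] => zero_le_one
  | a :: b :: t => mul_nonneg (hP a b) (fwdProd_nonneg P hP (b :: t))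

lemma fwdProd_pos {adj : S → S → Prop} (P : S → S → ℝ)
    (hP : ∀ a b, adj a b → 0 < P a b) :
    ∀ L : List S, L.Chain' adj → 0 < fwdProd P L
  | [], _ => one_pos
  | [_], _ => one_pos
  | a :: b :: t, h => by
      have h1 := List.isChain_cons_cons.mp h
      exact mul_pos (hP a b h1.1) (fwdProd_pos P hP (b :: t) h1.2)

lemma chain'_nodup_of_acyclic {adj : S → S → Prop}
    (hacyc : ∀ s, ¬ Relation.TransGen adj s s)
    {L : List S} (hL : L.Chain' adj) : L.Nodup := by
  have h1 : L.Chain' (Relation.TransGen adj) := hL.imp fun _ _ h => Relation.TransGen.single h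
  have : IsTrans S (Relation.TransGen adj) := ⟨fun _ _ _ => Relation.TransGen.trans⟩
  refine List.Pairwise.imp ?_ (List.isChain_iff_pairwise.mp h1)
  intro a b h he
  exact hacyc a (he ▸ h)

lemma wf_of_acyclic [Finite S] {r : S → S → Prop}
    (h : ∀ a, ¬ Relation.TransGen r a a) : WellFounded r := by
  have h1 : IsTrans S (Relation.TransGen r) := ⟨fun _ _ _ => Relation.TransGen.trans⟩
  have h0 : IsIrrefl S (Relation.TransGen r) := ⟨h⟩
  exact Subrelation.wf (fun {a b} hab => Relation.TransGen.single hab)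
    (@Finite.wellFounded_of_trans_of_irrefl S _ _ h1 h0)

lemma chains_finite [Fintype S] {adj : S → S → Prop}
    (hacyc : ∀ s, ¬ Relation.TransGen adj s s)
    (s : Set (List S)) (hs : ∀ L ∈ s, L.Chain' adj) : s.Finite :=
  (List.finite_length_le S (Fintype.card S)).subset fun L hL =>
    (chain'_nodup_of_acyclic hacyc (hs L hL)).length_le_card

/-- Trajectories from `s` to some sink. -/
def Trajs (adj : S → S → Prop) (s : S) : Set (List S) :=
  {L | L.head? = some s ∧ L.Chain' adj ∧ ∃ x, L.getLast? = some x ∧ IsSink adj x}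

lemma trajs_finite [Fintype S] {adj : S → S → Prop}
    (hacyc : ∀ s, ¬ Relation.TransGen adj s s) (s : S) : (Trajs adj s).Finite :=
  chains_finite hacyc _ fun _ hL => hL.2.1

lemma trajs_sink {adj : S → S → Prop} {x : S} (hx : IsSink adj x) :
    Trajs adj x = {[x]} := by
  ext L
  constructor
  · rintro ⟨hh, hc, y, hl, hy⟩
    match L, hh, hc, hl with
    | [a], hh, hc, hl =>
      obtain rfl : x = a := by symm; simpa using hh
      rfl
    | a :: b :: t, hh, hc, hl =>
      obtain rfl : x = a := by symm; simpa using hh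
      exact absurd (List.isChain_cons_cons.mp hc).1 (hx b)
  · rintro rfl
    exact ⟨rfl, List.isChain_singleton x, x, rfl, hx⟩

lemma finsum_mem_mul_left' {α : Type} {s : Set α} (hs : s.Finite) (c : ℝ) (f : α → ℝ) :
    ∑ᶠ i ∈ s, c * f i = c * ∑ᶠ i ∈ s, f i := by
  classical
  haveI := hs.fintype
  rw [finsum_mem_eq_toFinset_sum, finsum_mem_eq_toFinset_sum, Finset.mul_sum]

lemma trajs_decomp [Fintype S] {adj : S → S → Prop}
    (hacyc : ∀ s, ¬ Relation.TransGen adj s s)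
    {s : S} (hs : ¬ IsSink adj s) (f : List S → ℝ) :
    ∑ᶠ L ∈ Trajs adj s, f L
      = ∑ s' : S, (if adj s s' then ∑ᶠ L ∈ Trajs adj s', f (s :: L) else 0) := by
  classical
  set t : S → Set (List S) :=
    fun s' => if adj s s' then (fun L => s :: L) '' Trajs adj s' else ∅ with ht
  have hU : Trajs adj s = ⋃ s', t s' := by
    ext L
    simp only [Set.mem_iUnion]
    constructor
    · rintro ⟨hh, hc, x, hl, hx⟩
      match L, hh, hc, hl with
      | [a], hh, hc, hl =>
        obtain rfl : s = a := by symm; simpa using hh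
        obtain rfl : s = x := by simpa using hl
        exact absurd hx hs
      | a :: b :: tl, hh, hc, hl =>
        obtain rfl : s = a := by symm; simpa using hh
        have hadj : adj s b := (List.isChain_cons_cons.mp hc).1
        refine ⟨b, ?_⟩
        simp only [ht, if_pos hadj]
        exact ⟨b :: tl, ⟨rfl, (List.isChain_cons_cons.mp hc).2, x, by simpa using hl, hx⟩, rfl⟩
    · rintro ⟨s', hL⟩
      simp only [ht] at hL
      by_cases h : adj s s'
      · rw [if_pos h] at hL
        obtain ⟨M, ⟨hh, hc, x, hl, hx⟩, rfl⟩ := hL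
        match M, hh, hc, hl with
        | b :: tl, hh, hc, hl =>
          obtain rfl : s' = b := by symm; simpa using hh
          exact ⟨rfl, List.isChain_cons_cons.mpr ⟨h, hc⟩, x, by simpa using hl, hx⟩
      · rw [if_neg h] at hL; exact absurd hL (Set.notMem_empty _)
  have hdisj : Pairwise (Function.onFun Disjoint t) := by
    intro s1 s2 hne
    refine Set.disjoint_left.mpr fun L h1 h2 => hne ?_
    simp only [ht] at h1 h2
    by_cases e1 : adj s s1
    · rw [if_pos e1] at h1
      by_cases e2 : adj s s2
      · rw [if_pos e2] at h2
        obtain ⟨M1, hM1, rfl⟩ := h1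
        obtain ⟨M2, hM2, hEq⟩ := h2
        obtain rfl : M2 = M1 := List.cons_injective hEq
        have h12 : some s1 = some s2 := hM1.1.symm.trans hM2.1
        exact Option.some_injective S h12
      · rw [if_neg e2] at h2; exact absurd h2 (Set.notMem_empty _)
    · rw [if_neg e1] at h1; exact absurd h1 (Set.notMem_empty _)
  have hfin : ∀ s', (t s').Finite := by
    intro s'
    simp only [ht]
    by_cases h : adj s s'
    · rw [if_pos h]; exact ((trajs_finite hacyc s').image _)
    · rw [if_neg h]; exact Set.finite_empty
  rw [hU, finsum_mem_iUnion hdisj hfin, finsum_eq_sum_of_fintype]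
  refine Finset.sum_congr rfl fun s' _ => ?_
  simp only [ht]
  by_cases h : adj s s'
  · rw [if_pos h, if_pos h, finsum_mem_image (List.cons_injective.injOn)]
  · rw [if_neg h, if_neg h, finsum_mem_empty]

lemma sum_trajs_one [Fintype S] {adj : S → S → Prop}
    (hacyc : ∀ s, ¬ Relation.TransGen adj s s)
    (P : S → S → ℝ) (hP0 : ∀ s s', ¬ adj s s' → P s s' = 0)
    (hP1 : ∀ s, ¬ IsSink adj s → ∑ s', P s s' = 1)
    (s : S) : ∑ᶠ L ∈ Trajs adj s, fwdProd P L = 1 := by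
  have hwf : WellFounded (fun a b => adj b a) :=
    wf_of_acyclic (fun a h => hacyc a (Relation.transGen_swap.mp h))
  induction s using hwf.induction with
  | _ s IH =>
    by_cases hs : IsSink adj s
    · rw [trajs_sink hs, finsum_mem_singleton, fwdProd_singleton]
    · rw [trajs_decomp hacyc hs, ← hP1 s hs]
      refine Finset.sum_congr rfl fun s' _ => ?_
      by_cases h : adj s s'
      · rw [if_pos h]
        have he : ∀ L ∈ Trajs adj s', fwdProd P (s :: L) = P s s' * fwdProd P L := by
          intro L hL
          obtain ⟨hh, -, -⟩ := hL
          match L, hh with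
          | b :: tl, hh =>
            obtain rfl : s' = b := by symm; simpa using hh
            rfl
        rw [finsum_mem_congr rfl he, finsum_mem_mul_left' (trajs_finite hacyc s'), IH s' h, mul_one]
      · rw [if_neg h, hP0 s s' h]

lemma exists_path {adj : S → S → Prop} {a b : S} (h : Relation.ReflTransGen adj a b) :
    ∃ L : List S, L.head? = some a ∧ L.Chain' adj ∧ L.getLast? = some b := by
  induction h with
  | refl => exact ⟨[a], rfl, List.isChain_singleton a, rfl⟩
  | @tail c d hac hcd IH =>
    obtain ⟨L, hh, hc, hl⟩ := IH
    refine ⟨L ++ [d], ?_, ?_, List.getLast?_concat⟩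
    · match L, hh with
      | e :: t, hh => simpa using hh
    · refine hc.append (List.isChain_singleton d) ?_
      intro x hx y hy
      simp only [List.head?_cons, Option.mem_def, Option.some.injEq] at hy
      rw [hl] at hx
      simp only [Option.mem_def, Option.some.injEq] at hx
      subst hx; subst hy
      exact hcd

noncomputable def trajW (PB : S → S → ℝ) (R : S → ℝ) (L : List S) : ℝ :=
  match L.getLast? with
  | some x => R x * bwdProd PB L
  | none => 0

lemma trajW_eq (PB : S → S → ℝ) (R : S → ℝ) {L : List S} {x : S}
    (h : L.getLast? = some x) : trajW PB R L = R x * bwdProd PB L := by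
  rw [trajW, h]

lemma bwdProd_singleton (PB : S → S → ℝ) (a : S) : bwdProd PB [a] = 1 := rfl

lemma bwdProd_cons_cons (PB : S → S → ℝ) (a b : S) (t : List S) :
    bwdProd PB (a :: b :: t) = PB b a * bwdProd PB (b :: t) := rfl

lemma key_lemma {adj : S → S → Prop} (PB : S → S → ℝ) (R : S → ℝ)
    (F : S → ℝ) (PF : S → S → ℝ)
    (hPFdef : ∀ s s', adj s s' → F s * PF s s' = F s' * PB s' s)
    (hFsink : ∀ x, IsSink adj x → F x = R x) :
    ∀ (L : List S) (s : S), L.head? = some s → L.Chain' adj →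
      (∃ x, L.getLast? = some x ∧ IsSink adj x) →
      F s * fwdProd PF L = trajW PB R L
  | [], s, hh, _, _ => by simp at hh
  | [a], s, hh, _, hx => by
      obtain rfl : s = a := by symm; simpa using hh
      obtain ⟨x, hl, hx⟩ := hx
      obtain rfl : s = x := by simpa using hl
      rw [fwdProd_singleton, trajW_eq PB R (show [s].getLast? = some s from rfl), hFsink s hx]
      rfl
  | a :: b :: t, s, hh, hc, hx => by
      obtain rfl : s = a := by symm; simpa using hh
      obtain ⟨hadj, hc'⟩ := List.isChain_cons_cons.mp hc
      obtain ⟨x, hl, hxs⟩ := hx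
      have hl' : (b :: t).getLast? = some x := by rwa [List.getLast?_cons_cons] at hl
      have IH := key_lemma PB R F PF hPFdef hFsink (b :: t) b rfl hc' ⟨x, hl', hxs⟩
      rw [trajW_eq PB R hl'] at IH
      rw [fwdProd_cons_cons, trajW_eq PB R hl, bwdProd_cons_cons]
      have h2 := hPFdef s b hadj
      calc F s * (PF s b * fwdProd PF (b :: t))
          = (F s * PF s b) * fwdProd PF (b :: t) := by ring
        _ = F b * PB b s * fwdProd PF (b :: t) := by rw [h2]
        _ = PB b s * (F b * fwdProd PF (b :: t)) := by ring
        _ = PB b s * (R x * bwdProd PB (b :: t)) := by rw [IH]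
        _ = R x * (PB b s * bwdProd PB (b :: t)) := by ring

lemma fwdProd_join (P : S → S → ℝ) {p q : List S} {s : S}
    (hp : p.getLast? = some s) (hq : q.head? = some s) :
    fwdProd P (p ++ q.tail) = fwdProd P p * fwdProd P q := by
  match q, hq with
  | a :: t, hq =>
    obtain rfl : s = a := by symm; simpa using hq
    exact fwdProd_append P p s hp t

lemma join_mem {adj : S → S → Prop} {p q : List S} {s0 s : S}
    (hph : p.head? = some s0) (hpc : p.Chain' adj) (hpl : p.getLast? = some s)
    (hqh : q.head? = some s) (hqc : q.Chain' adj) :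
    (p ++ q.tail).head? = some s0 ∧ (p ++ q.tail).Chain' adj ∧
      (p ++ q.tail).getLast? = q.getLast? := by
  match q, hqh with
  | a :: t, hqh =>
    obtain rfl : s = a := by symm; simpa using hqh
    refine ⟨?_, ?_, ?_⟩
    · match p, hph with
      | e :: pt, hph => simpa using hph
    · show (p ++ t).Chain' adj
      cases t with
      | nil => simpa using hpc
      | cons b t' =>
        refine hpc.append (List.isChain_cons_cons.mp hqc).2 ?_
        intro x hx y hy
        rw [hpl] at hx
        simp only [Option.mem_def, Option.some.injEq] at hx
        simp only [List.head?_cons, Option.mem_def, Option.some.injEq] at hy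
        subst hx; subst hy
        exact (List.isChain_cons_cons.mp hqc).1
    · show (p ++ t).getLast? = (s :: t).getLast?
      cases t with
      | nil => simpa using hpl
      | cons b t' =>
        rw [List.getLast?_append, List.getLast?_cons_cons]
        have : (b :: t').getLast?.isSome := by
          rw [List.getLast?_isSome]; simp
        obtain ⟨y, hy⟩ := Option.isSome_iff_exists.mp this
        rw [hy]; rfl

end Helpers

/-- Trajectory balance: on a finite DAG with unique source `s0`, sinks `X`, positive reward
`R` on `X`, and a fixed full-support backward policy `P_B`, there is a unique pair of a
forward policy `P_F` and positive scalar `Z` with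
`Z·∏ P_F = R(x)·P_B(τ|x)` for every complete trajectory; at this solution
`Z = Σ_{x∈X} R(x)` and the terminating distribution is `P_F^⊤(x) = R(x)/Z`. -/
theorem stmt4 [Fintype S] (adj : S → S → Prop) (s0 : S)
    (hacyc : ∀ s, ¬ Relation.TransGen adj s s)
    (hs0 : ∀ s, ¬ adj s s0)
    (hreach : ∀ s, Relation.ReflTransGen adj s0 s)
    (hterm : ∀ s, ∃ x, Relation.ReflTransGen adj s x ∧ IsSink adj x)
    (hX : ∃ x, IsSink adj x)
    (R : S → ℝ) (hR : ∀ x, IsSink adj x → 0 < R x)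
    (PB : S → S → ℝ) (hPB : IsBwdPolicy adj s0 PB) (hPBfull : FullSupportBwd adj PB) :
    (∃! p : (S → S → ℝ) × ℝ, IsFwdPolicy adj p.1 ∧ 0 < p.2 ∧
        ∀ L : List S, IsCompleteTraj adj s0 L →
          p.2 * fwdProd p.1 L = R (trajEnd s0 L) * bwdProd PB L) ∧
    (∀ PF : S → S → ℝ, ∀ Z : ℝ, IsFwdPolicy adj PF → 0 < Z →
        (∀ L : List S, IsCompleteTraj adj s0 L →
          Z * fwdProd PF L = R (trajEnd s0 L) * bwdProd PB L) →
        Z = (∑ᶠ x ∈ {x : S | IsSink adj x}, R x) ∧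
        ∀ x, IsSink adj x → PFtop adj s0 PF x = R x / Z) := by
  classical
  obtain ⟨hPBnn, hPB0, hPB1⟩ := hPB
  have hacyc' : ∀ s, ¬ Relation.TransGen (fun a b => adj b a) s s :=
    fun s h => hacyc s (Relation.transGen_swap.mp h)
  have hwfP : WellFounded adj := wf_of_acyclic hacyc
  have hsink' : ∀ y, IsSink (fun a b => adj b a) y ↔ y = s0 := by
    intro y
    constructor
    · intro hy
      rcases (hreach y).cases_tail with h | ⟨u, _, hu⟩
      · exact h
      · exact absurd hu (hy u)
    · rintro rfl
      exact fun y => hs0 y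
  have hterm' : ∀ s, ∃ x, Relation.ReflTransGen (fun a b => adj b a) s x ∧
      IsSink (fun a b => adj b a) x := by
    intro s
    induction s using hwfP.induction with
    | _ s IH =>
      by_cases h : IsSink (fun a b => adj b a) s
      · exact ⟨s, Relation.ReflTransGen.refl, h⟩
      · obtain ⟨p, hp⟩ := not_forall.mp h
        rw [not_not] at hp
        obtain ⟨x, hx1, hx2⟩ := IH p hp
        exact ⟨x, Relation.ReflTransGen.head hp hx1, hx2⟩
  have hPsetFin : ∀ u : S,
      ({L : List S | L.head? = some s0 ∧ L.Chain' adj ∧ L.getLast? = some u}).Finite :=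
    fun _ => chains_finite hacyc _ fun _ hL => hL.2.1
  -- backward walk from any state reaches s0 with total weight one
  have hPsum : ∀ u : S,
      ∑ᶠ L ∈ {L : List S | L.head? = some s0 ∧ L.Chain' adj ∧ L.getLast? = some u},
        bwdProd PB L = 1 := by
    intro u
    have hP1' : ∀ s, ¬ IsSink (fun a b => adj b a) s → ∑ s', PB s s' = 1 := by
      intro s hsk
      refine hPB1 s fun heq => hsk ?_
      rw [heq]
      exact (hsink' s0).mpr rfl
    have h1 := sum_trajs_one hacyc' PB (fun s s' h => hPB0 s' s h) hP1' u
    have hset : {L : List S | L.head? = some s0 ∧ L.Chain' adj ∧ L.getLast? = some u}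
        = List.reverse '' Trajs (fun a b => adj b a) u := by
      ext M
      simp only [Set.mem_image, Set.mem_setOf_eq]
      constructor
      · rintro ⟨hh, hc, hl⟩
        refine ⟨M.reverse, ⟨?_, ?_, s0, ?_, (hsink' s0).mpr rfl⟩, M.reverse_reverse⟩
        · rw [List.head?_reverse]; exact hl
        · exact List.isChain_reverse.mpr hc
        · rw [List.getLast?_reverse]; exact hh
      · rintro ⟨L, ⟨hh, hc, x, hl, hx⟩, rfl⟩
        obtain rfl : x = s0 := (hsink' x).mp hx
        refine ⟨?_, ?_, ?_⟩
        · rw [List.head?_reverse]; exact hl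
        · exact List.isChain_reverse.mpr hc
        · rw [List.getLast?_reverse]; exact hh
    rw [hset, finsum_mem_image (List.reverse_injective.injOn), ← h1]
    refine finsum_mem_congr rfl fun L hL => ?_
    show bwdProd PB L.reverse = fwdProd PB L
    unfold bwdProd
    rw [fwdProd_reverse]
  -- the flow function
  set F : S → ℝ := fun s => ∑ᶠ L ∈ Trajs adj s, trajW PB R L with hF
  have hFsink : ∀ x, IsSink adj x → F x = R x := by
    intro x hx
    simp only [hF]
    rw [trajs_sink hx, finsum_mem_singleton,
      trajW_eq PB R (show [x].getLast? = some x from rfl), bwdProd_singleton, mul_one]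
  have hFrec : ∀ s, ¬ IsSink adj s → F s = ∑ s', PB s' s * F s' := by
    intro s hs
    simp only [hF]
    rw [trajs_decomp hacyc hs (trajW PB R)]
    refine Finset.sum_congr rfl fun s' _ => ?_
    by_cases h : adj s s'
    · rw [if_pos h]
      have he : ∀ L ∈ Trajs adj s', trajW PB R (s :: L) = PB s' s * trajW PB R L := by
        intro L hL
        obtain ⟨hh, -, x, hl, -⟩ := hL
        match L, hh, hl with
        | b :: t, hh, hl =>
          obtain rfl : s' = b := by symm; simpa using hh
          rw [trajW_eq PB R hl,
            trajW_eq PB R (show (s :: s' :: t).getLast? = some x from by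
              rwa [List.getLast?_cons_cons]), bwdProd_cons_cons]
          ring
      rw [finsum_mem_congr rfl he, finsum_mem_mul_left' (trajs_finite hacyc s')]
    · rw [if_neg h, hPB0 s s' h, zero_mul]
  have hFpos : ∀ s, 0 < F s := by
    intro s
    obtain ⟨x, hsx, hx⟩ := hterm s
    obtain ⟨p, hph, hpc, hpl⟩ := exists_path hsx
    have hpmem : p ∈ Trajs adj s := ⟨hph, hpc, x, hpl, hx⟩
    have hfin := trajs_finite hacyc s (adj := adj)
    simp only [hF]
    haveI := hfin.fintype
    rw [finsum_mem_eq_toFinset_sum]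
    refine Finset.sum_pos' ?_ ⟨p, Set.mem_toFinset.mpr hpmem, ?_⟩
    · intro L hL
      obtain ⟨-, -, y, hl, hy⟩ := (Set.mem_toFinset.mp hL)
      rw [trajW_eq PB R hl]
      exact mul_nonneg (hR y hy).le (fwdProd_nonneg _ (fun a b => hPBnn a b) L)
    · rw [trajW_eq PB R hpl]
      exact mul_pos (hR x hx) (fwdProd_pos _ (fun a b h => hPBfull a b h) p hpc)
  -- the forward policy
  set PF : S → S → ℝ := fun s s' => if IsSink adj s then 0 else F s' * PB s' s / F s with hPFd
  have hPFzero : ∀ s s', ¬ adj s s' → PF s s' = 0 := by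
    intro s s' h
    simp only [hPFd]
    split
    · rfl
    · rw [hPB0 s s' h]; ring
  have hPFnn : ∀ s s', 0 ≤ PF s s' := by
    intro s s'
    simp only [hPFd]
    split
    · exact le_refl 0
    · exact div_nonneg (mul_nonneg (hFpos s').le (hPBnn s s')) (hFpos s).le
  have hPFrow : ∀ s, ¬ IsSink adj s → ∑ s', PF s s' = 1 := by
    intro s hs
    simp only [hPFd, if_neg hs]
    rw [← Finset.sum_div, div_eq_one_iff_eq (hFpos s).ne']
    rw [hFrec s hs]
    exact Finset.sum_congr rfl fun s' _ => mul_comm _ _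
  have hfwd : IsFwdPolicy adj PF := ⟨hPFnn, hPFzero, hPFrow⟩
  have hPFdef : ∀ s s', adj s s' → F s * PF s s' = F s' * PB s' s := by
    intro s s' h
    have hs : ¬ IsSink adj s := fun hsk => hsk s' h
    simp only [hPFd, if_neg hs]
    rw [mul_div_assoc', mul_div_cancel_left₀ _ (hFpos s).ne']
  have htbF : ∀ L : List S, IsCompleteTraj adj s0 L →
      F s0 * fwdProd PF L = R (trajEnd s0 L) * bwdProd PB L := by
    rintro L ⟨hh, hc, x, hl, hx⟩
    have hk := key_lemma PB R F PF hPFdef hFsink L s0 hh hc ⟨x, hl, hx⟩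
    rw [trajW_eq PB R hl] at hk
    have hte : trajEnd s0 L = x := by simp [trajEnd, hl]
    rw [hte, hk]
  -- every solution agrees with (PF, F s0)
  have master : ∀ (PF1 : S → S → ℝ) (Z1 : ℝ), IsFwdPolicy adj PF1 → 0 < Z1 →
      (∀ L : List S, IsCompleteTraj adj s0 L →
        Z1 * fwdProd PF1 L = R (trajEnd s0 L) * bwdProd PB L) →
      Z1 = F s0 ∧ PF1 = PF := by
    rintro PF1 Z1 ⟨h1nn, h10, h1row⟩ hZ1 htb1
    have hone : ∀ s, ∑ᶠ L ∈ Trajs adj s, fwdProd PF1 L = 1 :=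
      sum_trajs_one hacyc PF1 h10 h1row
    have claimG : ∀ (p : List S) (s : S), p.head? = some s0 → p.Chain' adj →
        p.getLast? = some s → Z1 * fwdProd PF1 p = bwdProd PB p * F s := by
      intro p s hh hc hl
      have hjoin : ∀ q ∈ Trajs adj s,
          (Z1 * fwdProd PF1 p) * fwdProd PF1 q = bwdProd PB p * trajW PB R q := by
        intro q hq
        obtain ⟨hqh, hqc, x, hql, hqx⟩ := hq
        obtain ⟨jh, jc, jl⟩ := join_mem hh hc hl hqh hqc
        rw [hql] at jl
        have hcomp : IsCompleteTraj adj s0 (p ++ q.tail) := ⟨jh, jc, x, jl, hqx⟩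
        have h3 := htb1 _ hcomp
        rw [fwdProd_join PF1 hl hqh] at h3
        have hte : trajEnd s0 (p ++ q.tail) = x := by simp [trajEnd, jl]
        rw [hte] at h3
        have hbp : bwdProd PB (p ++ q.tail) = bwdProd PB p * bwdProd PB q :=
          fwdProd_join _ hl hqh
        rw [hbp] at h3
        rw [trajW_eq PB R hql]
        calc (Z1 * fwdProd PF1 p) * fwdProd PF1 q
            = Z1 * (fwdProd PF1 p * fwdProd PF1 q) := by ring
          _ = R x * (bwdProd PB p * bwdProd PB q) := h3
          _ = bwdProd PB p * (R x * bwdProd PB q) := by ring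
      calc Z1 * fwdProd PF1 p
          = (Z1 * fwdProd PF1 p) * ∑ᶠ q ∈ Trajs adj s, fwdProd PF1 q := by
            rw [hone s, mul_one]
        _ = ∑ᶠ q ∈ Trajs adj s, (Z1 * fwdProd PF1 p) * fwdProd PF1 q :=
            (finsum_mem_mul_left' (trajs_finite hacyc s) _ _).symm
        _ = ∑ᶠ q ∈ Trajs adj s, bwdProd PB p * trajW PB R q := finsum_mem_congr rfl hjoin
        _ = bwdProd PB p * F s := by
            rw [finsum_mem_mul_left' (trajs_finite hacyc s)]
    have hZ : Z1 = F s0 := by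
      have h5 := claimG [s0] s0 rfl (List.isChain_singleton s0) rfl
      rw [fwdProd_singleton, bwdProd_singleton, mul_one, one_mul] at h5
      exact h5
    refine ⟨hZ, funext fun s => funext fun s' => ?_⟩
    by_cases h : adj s s'
    · have hs : ¬ IsSink adj s := fun hsk => hsk s' h
      obtain ⟨p, hph, hpc, hpl⟩ := exists_path (hreach s)
      have hG1 := claimG p s hph hpc hpl
      have hpc' : (p ++ [s']).Chain' adj := by
        refine hpc.append (List.isChain_singleton s') ?_
        intro x hx y hy
        rw [hpl] at hx
        simp only [Option.mem_def, Option.some.injEq] at hx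
        simp only [List.head?_cons, Option.mem_def, Option.some.injEq] at hy
        subst hx; subst hy
        exact h
      have hph' : (p ++ [s']).head? = some s0 := by
        match p, hph with
        | e :: t, hph => simpa using hph
      have hG2 := claimG (p ++ [s']) s' hph' hpc' List.getLast?_concat
      have e1 : fwdProd PF1 (p ++ [s']) = fwdProd PF1 p * (PF1 s s' * 1) :=
        fwdProd_append PF1 p s hpl [s']
      have e2 : bwdProd PB (p ++ [s']) = bwdProd PB p * (PB s' s * 1) :=
        fwdProd_append (fun a b => PB b a) p s hpl [s']
      have hbp : 0 < bwdProd PB p := fwdProd_pos _ (fun a b hab => hPBfull a b hab) p hpc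
      rw [e1, e2] at hG2
      have h4 : F s * PF1 s s' = PB s' s * F s' := by
        have h6 : bwdProd PB p * (F s * PF1 s s') = bwdProd PB p * (PB s' s * F s') := by
          calc bwdProd PB p * (F s * PF1 s s')
              = (Z1 * fwdProd PF1 p) * PF1 s s' := by rw [hG1]; ring
            _ = Z1 * (fwdProd PF1 p * (PF1 s s' * 1)) := by ring
            _ = bwdProd PB p * (PB s' s * 1) * F s' := hG2
            _ = bwdProd PB p * (PB s' s * F s') := by ring
        exact mul_left_cancel₀ hbp.ne' h6
      simp only [hPFd, if_neg hs]
      rw [eq_div_iff (hFpos s).ne']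
      calc PF1 s s' * F s = F s * PF1 s s' := by ring
        _ = PB s' s * F s' := h4
        _ = F s' * PB s' s := by ring
    · rw [h10 s s' h, hPFzero s s' h]
  -- value of the partition function
  have hFs0 : F s0 = ∑ᶠ x ∈ {x : S | IsSink adj x}, R x := by
    set t : S → Set (List S) := fun x => if IsSink adj x then
      {L : List S | L.head? = some s0 ∧ L.Chain' adj ∧ L.getLast? = some x} else ∅ with htd
    have hU : Trajs adj s0 = ⋃ x, t x := by
      ext L
      simp only [Set.mem_iUnion]
      constructor
      · rintro ⟨hh, hc, x, hl, hx⟩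
        refine ⟨x, ?_⟩
        simp only [htd, if_pos hx]
        exact ⟨hh, hc, hl⟩
      · rintro ⟨x, hL⟩
        simp only [htd] at hL
        by_cases h : IsSink adj x
        · rw [if_pos h] at hL
          exact ⟨hL.1, hL.2.1, x, hL.2.2, h⟩
        · rw [if_neg h] at hL
          exact absurd hL (Set.notMem_empty _)
    have hdisj : Pairwise (Function.onFun Disjoint t) := by
      intro x1 x2 hne
      refine Set.disjoint_left.mpr fun L h1 h2 => hne ?_
      simp only [htd] at h1 h2
      by_cases e1 : IsSink adj x1
      · rw [if_pos e1] at h1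
        by_cases e2 : IsSink adj x2
        · rw [if_pos e2] at h2
          exact Option.some_injective S (h1.2.2.symm.trans h2.2.2)
        · rw [if_neg e2] at h2
          exact absurd h2 (Set.notMem_empty _)
      · rw [if_neg e1] at h1
        exact absurd h1 (Set.notMem_empty _)
    have hfin : ∀ x, (t x).Finite := by
      intro x
      simp only [htd]
      split
      · exact hPsetFin x
      · exact Set.finite_empty
    simp only [hF]
    rw [hU, finsum_mem_iUnion hdisj hfin]
    have hinner : ∀ x : S, (∑ᶠ L ∈ t x, trajW PB R L) = if IsSink adj x then R x else 0 := by
      intro x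
      simp only [htd]
      by_cases h : IsSink adj x
      · rw [if_pos h, if_pos h]
        have he : ∀ L ∈ {L : List S | L.head? = some s0 ∧ L.Chain' adj ∧ L.getLast? = some x},
            trajW PB R L = R x * bwdProd PB L := fun L hL => trajW_eq PB R hL.2.2
        rw [finsum_mem_congr rfl he, finsum_mem_mul_left' (hPsetFin x), hPsum x, mul_one]
      · rw [if_neg h, if_neg h, finsum_mem_empty]
    rw [finsum_congr hinner, finsum_mem_def]
    refine finsum_congr fun x => ?_
    by_cases h : IsSink adj x <;>
      simp [Set.indicator_apply, Set.mem_setOf_eq, h]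
  -- marginal terminating probabilities
  have hPFtop : ∀ (PF1 : S → S → ℝ) (Z1 : ℝ), 0 < Z1 →
      (∀ L, IsCompleteTraj adj s0 L →
        Z1 * fwdProd PF1 L = R (trajEnd s0 L) * bwdProd PB L) →
      ∀ x, IsSink adj x → PFtop adj s0 PF1 x = R x / Z1 := by
    intro PF1 Z1 hZ1 htb1 x hx
    have hset : {L : List S | IsCompleteTraj adj s0 L ∧ L.getLast? = some x}
        = {L : List S | L.head? = some s0 ∧ L.Chain' adj ∧ L.getLast? = some x} := by
      ext L
      constructor
      · rintro ⟨⟨hh, hc, -⟩, hl⟩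
        exact ⟨hh, hc, hl⟩
      · rintro ⟨hh, hc, hl⟩
        exact ⟨⟨hh, hc, x, hl, hx⟩, hl⟩
    rw [PFtop, hset]
    have he : ∀ L ∈ {L : List S | L.head? = some s0 ∧ L.Chain' adj ∧ L.getLast? = some x},
        fwdProd PF1 L = (R x / Z1) * bwdProd PB L := by
      intro L hL
      have hcomp : IsCompleteTraj adj s0 L := ⟨hL.1, hL.2.1, x, hL.2.2, hx⟩
      have h3 := htb1 L hcomp
      have hte : trajEnd s0 L = x := by simp [trajEnd, hL.2.2]
      rw [hte] at h3
      rw [div_mul_eq_mul_div, eq_div_iff hZ1.ne']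
      linarith [h3]
    rw [finsum_mem_congr rfl he, finsum_mem_mul_left' (hPsetFin x), hPsum x, mul_one]
  refine ⟨⟨(PF, F s0), ⟨hfwd, hFpos s0, htbF⟩, ?_⟩, ?_⟩
  · rintro ⟨PF1, Z1⟩ ⟨h1, h2, h3⟩
    obtain ⟨hZ, hPFeq⟩ := master PF1 Z1 h1 h2 h3
    simp only [Prod.mk.injEq]
    exact ⟨hPFeq, hZ⟩
  · intro PF1 Z1 h1 h2 h3
    obtain ⟨hZ, -⟩ := master PF1 Z1 h1 h2 h3
    exact ⟨hZ.trans hFs0, fun x hx => by rw [hPFtop PF1 Z1 h2 h3 x hx, hZ]⟩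
end

section
/- If the trajectory balance condition Z·P_F(τ) = R(x_τ)·P_B(τ|x_τ) holds for all complete trajectories τ on a finite DAG with unique source and terminal states X (with full-support forward and backward policies and positive reward R), then for every terminal state x the terminating probability satisfies P_F^⊤(x) = R(x)/Z, where Z = Σ_{x'∈X} R(x'). -/
variable {S : Type}

def FullSupportFwd (adj : S → S → Prop) (PF : S → S → ℝ) : Prop :=
  ∀ s s', adj s s' → 0 < PF s s'

namespace Stmt5Aux

open Relation Set

lemma fwdProd_cons_cons (P : S → S → ℝ) (a b : S) (rest : List S) :
    fwdProd P (a :: b :: rest) = P a b * fwdProd P (b :: rest) := rfl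

lemma fwdProd_single (P : S → S → ℝ) (a : S) : fwdProd P [a] = 1 := rfl

lemma chain_transGen {adj : S → S → Prop} {b : S} : ∀ {a : S} {L : List S},
    List.Chain adj a L → b ∈ L → Relation.TransGen adj a b := by
  intro a L
  induction L generalizing a with
  | nil => intro _ h; simp at h
  | cons c L ih =>
    intro h hb
    replace h : adj a c ∧ List.Chain adj c L := List.isChain_cons_cons.1 h
    rcases List.mem_cons.1 hb with rfl | hb
    · exact .single h.1
    · exact (Relation.TransGen.single h.1).trans (ih h.2 hb)

lemma chain'_nodup {adj : S → S → Prop} (hacyc : ∀ s, ¬ Relation.TransGen adj s s) :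
    ∀ {L : List S}, List.Chain' adj L → L.Nodup := by
  intro L
  induction L with
  | nil => simp
  | cons a L ih =>
    intro h
    have h1 : List.Chain adj a L := h
    exact List.nodup_cons.2 ⟨fun hb => hacyc a (chain_transGen h1 hb),
      ih (List.IsChain.tail (l := a :: L) h)⟩

lemma chain'_finite [Fintype S] {adj : S → S → Prop} (hacyc : ∀ s, ¬ Relation.TransGen adj s s) :
    {L : List S | List.Chain' adj L}.Finite :=
  (List.finite_length_le S (Fintype.card S)).subset
    (fun _ hL => (chain'_nodup hacyc hL).length_le_card)

lemma fwdProd_append (P : S → S → ℝ) : ∀ {M : List S} {m s : S}, M.getLast? = some m →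
    fwdProd P (M ++ [s]) = fwdProd P M * P m s := by
  intro M
  induction M with
  | nil => intro m s h; simp at h
  | cons a M ih =>
    intro m s h
    cases M with
    | nil =>
      simp only [List.getLast?_singleton, Option.some.injEq] at h
      subst h
      simp [fwdProd_cons_cons, fwdProd_single]
    | cons b M' =>
      rw [List.getLast?_cons_cons] at h
      have : (a :: b :: M') ++ [s] = a :: ((b :: M') ++ [s]) := rfl
      rw [this, show (b :: M') ++ [s] = b :: (M' ++ [s]) from rfl]
      rw [fwdProd_cons_cons, show b :: (M' ++ [s]) = (b :: M') ++ [s] from rfl, ih h,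
        fwdProd_cons_cons, mul_assoc]

lemma wf_flip [Fintype S] {adj : S → S → Prop} (hacyc : ∀ s, ¬ Relation.TransGen adj s s) :
    WellFounded (fun a b => adj b a) := by
  have hirr : IsIrrefl S (TransGen (Function.swap adj)) :=
    ⟨fun a h => hacyc a (Relation.transGen_swap.1 h)⟩
  have hwf := Finite.wellFounded_of_trans_of_irrefl (TransGen (Function.swap adj))
  exact @Subrelation.wf S (TransGen (Function.swap adj)) (fun a b => adj b a)
    (fun {a b} h => TransGen.single h) hwf

lemma wf_adj [Fintype S] {adj : S → S → Prop} (hacyc : ∀ s, ¬ Relation.TransGen adj s s) :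
    WellFounded adj := by
  have hirr : IsIrrefl S (TransGen adj) := ⟨fun a h => hacyc a h⟩
  have hwf := Finite.wellFounded_of_trans_of_irrefl (TransGen adj)
  exact @Subrelation.wf S (TransGen adj) adj (fun {a b} h => TransGen.single h) hwf

lemma finsum_mem_of_finite {α : Type*} {T : Set α} (h : T.Finite) (f : α → ℝ) :
    ∑ᶠ x ∈ T, f x = ∑ x ∈ h.toFinset, f x := by
  rw [← finsum_mem_coe_finset, h.coe_toFinset]

end Stmt5Aux

namespace Stmt5Aux

open Relation Set

def TrajFrom (adj : S → S → Prop) (s : S) : Set (List S) :=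
  {L | L.head? = some s ∧ L.Chain' adj ∧ ∃ x, L.getLast? = some x ∧ IsSink adj x}

lemma trajFrom_finite [Fintype S] {adj : S → S → Prop}
    (hacyc : ∀ s, ¬ Relation.TransGen adj s s) (s : S) : (TrajFrom adj s).Finite :=
  (chain'_finite hacyc).subset (fun _ hL => hL.2.1)

lemma trajFrom_sink {adj : S → S → Prop} {s : S} (hs : IsSink adj s) :
    TrajFrom adj s = {[s]} := by
  ext L
  constructor
  · rintro ⟨h1, h2, x, h3, h4⟩
    match L, h1 with
    | s :: M, h1 =>
      simp only [List.head?_cons, Option.some.injEq] at h1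
      subst h1
      cases M with
      | nil => rfl
      | cons m M' =>
        exact absurd (List.isChain_cons_cons.1 h2).1 (hs m)
  · rintro rfl
    exact ⟨rfl, List.isChain_singleton s, s, rfl, hs⟩

lemma trajFrom_decomp {adj : S → S → Prop} {s : S} (hs : ¬ IsSink adj s) :
    TrajFrom adj s = (fun M => s :: M) '' ⋃ s' ∈ {s' | adj s s'}, TrajFrom adj s' := by
  ext L
  constructor
  · rintro ⟨h1, h2, x, h3, h4⟩
    match L, h1 with
    | s₁ :: M, h1 =>
      simp only [List.head?_cons, Option.some.injEq] at h1
      subst h1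
      cases M with
      | nil =>
        simp only [List.getLast?_singleton, Option.some.injEq] at h3
        subst h3
        exact absurd h4 hs
      | cons m M' =>
        replace h2 := List.isChain_cons_cons.1 h2
        rw [List.getLast?_cons_cons] at h3
        refine ⟨m :: M', mem_biUnion h2.1 ⟨rfl, h2.2, x, h3, h4⟩, rfl⟩
  · rintro ⟨M, hM, rfl⟩
    rcases mem_iUnion₂.1 hM with ⟨s', hadj, h1, h2, x, h3, h4⟩
    match M, h1 with
    | s' :: M', h1 =>
      simp only [List.head?_cons, Option.some.injEq] at h1
      subst h1
      exact ⟨rfl, List.isChain_cons_cons.2 ⟨hadj, h2⟩, x, by rwa [List.getLast?_cons_cons], h4⟩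

lemma trajFrom_disjoint {adj : S → S → Prop} {I : Set S} :
    I.PairwiseDisjoint (TrajFrom adj) := by
  intro a _ b _ hab
  refine Set.disjoint_left.2 fun L hLa hLb => hab ?_
  have := hLa.1.symm.trans hLb.1
  exact Option.some.inj this

lemma fwd_total [Fintype S] {adj : S → S → Prop}
    (hacyc : ∀ s, ¬ Relation.TransGen adj s s)
    {PF : S → S → ℝ} (hPF : IsFwdPolicy adj PF) :
    ∀ s : S, ∑ᶠ L ∈ TrajFrom adj s, fwdProd PF L = 1 := by
  classical
  intro s
  induction s using (wf_flip hacyc).induction with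
  | _ s ih =>
  by_cases hs : IsSink adj s
  · rw [trajFrom_sink hs, finsum_mem_singleton, fwdProd_single]
  · rw [trajFrom_decomp hs, finsum_mem_image (Set.injOn_of_injective List.cons_injective),
      finsum_mem_biUnion trajFrom_disjoint (Set.toFinite _)
        (fun s' _ => trajFrom_finite hacyc s')]
    have hinner : ∀ s' ∈ {s' | adj s s'},
        ∑ᶠ M ∈ TrajFrom adj s', fwdProd PF (s :: M) = PF s s' := by
      intro s' hadj
      have : ∑ᶠ M ∈ TrajFrom adj s', fwdProd PF (s :: M)
          = ∑ᶠ M ∈ TrajFrom adj s', PF s s' * fwdProd PF M := by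
        apply finsum_mem_congr rfl
        intro M hM
        match M, hM.1 with
        | m :: M', h1 =>
          simp only [List.head?_cons, Option.some.injEq] at h1
          subst h1
          rw [fwdProd_cons_cons]
      rw [this, finsum_mem_of_finite (trajFrom_finite hacyc s'), ← Finset.mul_sum,
        ← finsum_mem_of_finite (trajFrom_finite hacyc s'), ih s' hadj, mul_one]
    rw [finsum_mem_congr rfl hinner]
    have hset : {s' | adj s s'} = ↑(Finset.univ.filter (fun s' => adj s s')) := by
      ext s'; simp
    rw [hset, finsum_mem_coe_finset]
    rw [Finset.sum_filter_of_ne (fun s' _ h => by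
      by_contra hadj; exact h (hPF.2.1 s s' hadj))]
    exact hPF.2.2 s hs

end Stmt5Aux

namespace Stmt5Aux

open Relation Set

def PathTo (adj : S → S → Prop) (s0 s : S) : Set (List S) :=
  {L | L.head? = some s0 ∧ L.Chain' adj ∧ L.getLast? = some s}

lemma pathTo_finite [Fintype S] {adj : S → S → Prop}
    (hacyc : ∀ s, ¬ Relation.TransGen adj s s) (s0 s : S) : (PathTo adj s0 s).Finite :=
  (chain'_finite hacyc).subset (fun _ hL => hL.2.1)

lemma last_step {adj : S → S → Prop} {L : List S} {t : S} (h2 : L.Chain' adj)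
    (h3 : L.getLast? = some t) (hlen : 2 ≤ L.length) : ∃ c, adj c t := by
  have hrev : List.Chain' (fun a b => adj b a) L.reverse := (List.isChain_reverse).2 (by simpa)
  have hlast : L.reverse.head? = some t := by rw [List.head?_reverse]; exact h3
  match hr : L.reverse, hlast with
  | b :: N, hlast =>
    simp only [List.head?_cons, Option.some.injEq] at hlast
    subst hlast
    rw [hr] at hrev
    cases N with
    | nil =>
      have : L.length = 1 := by rw [← List.length_reverse, hr]; rfl
      omega
    | cons c N' => exact ⟨c, (List.isChain_cons_cons.1 hrev).1⟩

lemma pathTo_self {adj : S → S → Prop} {s0 : S} (hs0 : ∀ s, ¬ adj s s0) :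
    PathTo adj s0 s0 = {[s0]} := by
  ext L
  constructor
  · rintro ⟨h1, h2, h3⟩
    match L, h1 with
    | a :: M, h1 =>
      simp only [List.head?_cons, Option.some.injEq] at h1
      subst h1
      cases M with
      | nil => rfl
      | cons m M' =>
        exfalso
        obtain ⟨c, hc⟩ := last_step h2 h3 (by simp)
        exact hs0 c hc
  · rintro rfl
    exact ⟨rfl, List.isChain_singleton s0, rfl⟩

lemma pathTo_decomp {adj : S → S → Prop} {s0 s : S} (hs : s ≠ s0) :
    PathTo adj s0 s = (fun M => M ++ [s]) '' ⋃ s' ∈ {s' | adj s' s}, PathTo adj s0 s' := by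
  ext L
  constructor
  · rintro ⟨h1, h2, h3⟩
    have hL : L.dropLast ++ [s] = L := List.dropLast_append_getLast? s h3
    have hdne : L.dropLast ≠ [] := by
      intro hnil
      rw [hnil, List.nil_append] at hL
      rw [← hL] at h1 h3
      simp only [List.head?_cons, Option.some.injEq] at h1
      exact hs h1
    obtain ⟨m, hm⟩ : ∃ m, L.dropLast.getLast? = some m := by
      cases hLd : L.dropLast.getLast? with
      | none => exact absurd (List.getLast?_eq_none_iff.1 hLd) hdne
      | some m => exact ⟨m, rfl⟩
    have hchain : List.Chain' adj (L.dropLast ++ [s]) := by rwa [hL]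
    replace hchain := List.isChain_append.1 hchain
    have hadj : adj m s := hchain.2.2 m hm s rfl
    have hhead : L.dropLast.head? = some s0 := by
      rw [← hL] at h1
      rwa [List.head?_append_of_ne_nil _ hdne] at h1
    exact ⟨L.dropLast, mem_biUnion hadj ⟨hhead, hchain.1, hm⟩, hL⟩
  · rintro ⟨M, hM, rfl⟩
    rcases mem_iUnion₂.1 hM with ⟨s', hadj, h1, h2, h3⟩
    have hMne : M ≠ [] := by intro h; rw [h] at h3; simp at h3
    refine ⟨by rwa [List.head?_append_of_ne_nil _ hMne], ?_, by simp⟩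
    exact List.IsChain.append h2 (List.isChain_singleton s)
      (fun x hx y hy => by
        rw [h3, Option.mem_some_iff] at hx
        simp only [List.head?_cons, Option.mem_some_iff] at hy
        subst hx; subst hy; exact hadj)

lemma pathTo_disjoint {adj : S → S → Prop} {s0 : S} {I : Set S} :
    I.PairwiseDisjoint (PathTo adj s0) := by
  intro a _ b _ hab
  refine Set.disjoint_left.2 fun L hLa hLb => hab ?_
  exact Option.some.inj (hLa.2.2.symm.trans hLb.2.2)

lemma bwd_total [Fintype S] {adj : S → S → Prop} {s0 : S}
    (hacyc : ∀ s, ¬ Relation.TransGen adj s s) (hs0 : ∀ s, ¬ adj s s0)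
    {PB : S → S → ℝ} (hPB : IsBwdPolicy adj s0 PB) :
    ∀ s : S, ∑ᶠ L ∈ PathTo adj s0 s, bwdProd PB L = 1 := by
  classical
  intro s
  induction s using (wf_adj hacyc).induction with
  | _ s ih =>
  by_cases hs : s = s0
  · subst hs
    rw [pathTo_self hs0, finsum_mem_singleton]
    rfl
  · rw [pathTo_decomp hs,
      finsum_mem_image (Set.injOn_of_injective (List.append_left_injective [s])),
      finsum_mem_biUnion pathTo_disjoint (Set.toFinite _)
        (fun s' _ => pathTo_finite hacyc s0 s')]
    have hinner : ∀ s' ∈ {s' | adj s' s},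
        ∑ᶠ M ∈ PathTo adj s0 s', bwdProd PB (M ++ [s]) = PB s s' := by
      intro s' hadj
      have : ∑ᶠ M ∈ PathTo adj s0 s', bwdProd PB (M ++ [s])
          = ∑ᶠ M ∈ PathTo adj s0 s', bwdProd PB M * PB s s' := by
        apply finsum_mem_congr rfl
        intro M hM
        exact fwdProd_append (fun a b => PB b a) hM.2.2
      rw [this, finsum_mem_of_finite (pathTo_finite hacyc s0 s'), ← Finset.sum_mul,
        ← finsum_mem_of_finite (pathTo_finite hacyc s0 s'), ih s' hadj, one_mul]
    rw [finsum_mem_congr rfl hinner]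
    have hset : {s' | adj s' s} = ↑(Finset.univ.filter (fun s' => adj s' s)) := by
      ext s'; simp
    rw [hset, finsum_mem_coe_finset]
    rw [Finset.sum_filter_of_ne (fun s' _ h => by
      by_contra hadj; exact h (hPB.2.1 s' s hadj))]
    exact hPB.2.2 s hs

end Stmt5Aux

/-- If the trajectory balance condition `Z·P_F(τ) = R(x_τ)·P_B(τ|x_τ)` holds for all
complete trajectories on a finite DAG with unique source and full-support policies and
positive reward, then `Z = Σ_{x'∈X} R(x')` and every terminal state satisfies
`P_F^⊤(x) = R(x)/Z`. -/
theorem stmt5 [Fintype S] (adj : S → S → Prop) (s0 : S)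
    (hacyc : ∀ s, ¬ Relation.TransGen adj s s)
    (hs0 : ∀ s, ¬ adj s s0)
    (hreach : ∀ s, Relation.ReflTransGen adj s0 s)
    (hterm : ∀ s, ∃ x, Relation.ReflTransGen adj s x ∧ IsSink adj x)
    (R : S → ℝ) (hR : ∀ x, IsSink adj x → 0 < R x)
    (PF : S → S → ℝ) (hPF : IsFwdPolicy adj PF) (hPFfull : FullSupportFwd adj PF)
    (PB : S → S → ℝ) (hPB : IsBwdPolicy adj s0 PB) (hPBfull : FullSupportBwd adj PB)
    (Z : ℝ) (hZ : 0 < Z)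
    (hTB : ∀ L : List S, IsCompleteTraj adj s0 L →
      Z * fwdProd PF L = R (trajEnd s0 L) * bwdProd PB L) :
    Z = (∑ᶠ x ∈ {x : S | IsSink adj x}, R x) ∧
    ∀ x, IsSink adj x → PFtop adj s0 PF x = R x / Z := by
  classical
  have hsetEq : ∀ x, IsSink adj x →
      {L : List S | IsCompleteTraj adj s0 L ∧ L.getLast? = some x}
        = Stmt5Aux.PathTo adj s0 x := by
    intro x hx
    ext L
    constructor
    · rintro ⟨⟨h1, h2, _⟩, h3⟩
      exact ⟨h1, h2, h3⟩
    · rintro ⟨h1, h2, h3⟩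
      exact ⟨⟨h1, h2, x, h3, hx⟩, h3⟩
  have hpart2 : ∀ x, IsSink adj x → PFtop adj s0 PF x = R x / Z := by
    intro x hx
    have hcongr : ∀ L ∈ Stmt5Aux.PathTo adj s0 x,
        fwdProd PF L = (R x / Z) * bwdProd PB L := by
      rintro L ⟨h1, h2, h3⟩
      have hcomp : IsCompleteTraj adj s0 L := ⟨h1, h2, x, h3, hx⟩
      have htb := hTB L hcomp
      have hend : trajEnd s0 L = x := by rw [trajEnd, h3]; rfl
      rw [hend] at htb
      field_simp
      linarith [htb]
    rw [PFtop, hsetEq x hx, finsum_mem_congr rfl hcongr,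
      Stmt5Aux.finsum_mem_of_finite (Stmt5Aux.pathTo_finite hacyc s0 x), ← Finset.mul_sum,
      ← Stmt5Aux.finsum_mem_of_finite (Stmt5Aux.pathTo_finite hacyc s0 x),
      Stmt5Aux.bwd_total hacyc hs0 hPB x, mul_one]
  refine ⟨?_, hpart2⟩
  have hdecomp : Stmt5Aux.TrajFrom adj s0
      = ⋃ x ∈ {x : S | IsSink adj x}, Stmt5Aux.PathTo adj s0 x := by
    ext L
    constructor
    · rintro ⟨h1, h2, x, h3, h4⟩
      exact Set.mem_biUnion h4 ⟨h1, h2, h3⟩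
    · intro hL
      rcases Set.mem_iUnion₂.1 hL with ⟨x, hx, h1, h2, h3⟩
      exact ⟨h1, h2, x, h3, hx⟩
  have hone : (1 : ℝ) = ∑ᶠ x ∈ {x : S | IsSink adj x}, R x / Z := by
    rw [← Stmt5Aux.fwd_total hacyc hPF s0, hdecomp,
      finsum_mem_biUnion Stmt5Aux.pathTo_disjoint (Set.toFinite _)
        (fun x _ => Stmt5Aux.pathTo_finite hacyc s0 x)]
    apply finsum_mem_congr rfl
    intro x hx
    have := hpart2 x hx
    rwa [PFtop, hsetEq x hx] at this
  have hZeq : Z = Z * ∑ᶠ x ∈ {x : S | IsSink adj x}, R x / Z := by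
    rw [← hone, mul_one]
  rw [hZeq, Stmt5Aux.finsum_mem_of_finite (Set.toFinite _),
    Stmt5Aux.finsum_mem_of_finite (Set.toFinite _), Finset.mul_sum]
  apply Finset.sum_congr rfl
  intro x _
  field_simp
end

section
/- Correctness of the single-site Fitch algorithm: for a rooted binary tree z with leaves labeled by characters from a finite alphabet Σ, define recursively at each internal node u with children v, w: F(u) = F(v) ∩ F(w) if this intersection is nonempty, else F(v) ∪ F(w); and M(u) = M(v) + M(w) + [F(v) ∩ F(w) = ∅], with F(leaf) = {its character} and M(leaf) = 0. Then M(root) equals the minimum over all assignments of characters to internal nodes of the number of edges whose endpoints receive different characters, and F(root) is exactly the set of root characters achieving this minimum. -/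
/-- Rooted binary trees with leaves labeled by characters of `σ`. -/
inductive BTree (σ : Type) where
  | leaf : σ → BTree σ
  | node : BTree σ → BTree σ → BTree σ

/-- Rooted binary trees of the same shape in which every node (including internal ones)
carries a character: internal character assignments. -/
inductive LTree (σ : Type) where
  | leaf : σ → LTree σ
  | node : σ → LTree σ → LTree σ → LTree σ

def LTree.rootChar {σ : Type} : LTree σ → σ
  | .leaf c => c
  | .node c _ _ => c

/-- `Extends e t`: the fully labeled tree `e` is an internal assignment extending the
leaf-labeled tree `t` (same shape, same leaf characters). -/
inductive Extends {σ : Type} : LTree σ → BTree σ → Prop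
  | leaf (c : σ) : Extends (.leaf c) (.leaf c)
  | node (c : σ) {a l b r} : Extends a l → Extends b r →
      Extends (.node c a b) (.node l r)

/-- Parsimony cost of an assignment: the number of edges whose endpoints receive
different characters. -/
def LTree.cost {σ : Type} [DecidableEq σ] : LTree σ → ℕ
  | .leaf _ => 0
  | .node c a b =>
      a.cost + b.cost + (if a.rootChar = c then 0 else 1) + (if b.rootChar = c then 0 else 1)

/-- Fitch character set. -/
def fitchF {σ : Type} [DecidableEq σ] : BTree σ → Finset σ
  | .leaf c => {c}
  | .node l r =>
      if (fitchF l ∩ fitchF r).Nonempty then fitchF l ∩ fitchF r else fitchF l ∪ fitchF r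

/-- Fitch parsimony score. -/
def fitchM {σ : Type} [DecidableEq σ] : BTree σ → ℕ
  | .leaf _ => 0
  | .node l r => fitchM l + fitchM r + (if (fitchF l ∩ fitchF r).Nonempty then 0 else 1)

theorem fitchF_nonempty {σ : Type} [DecidableEq σ] (t : BTree σ) : (fitchF t).Nonempty := by
  induction t with
  | leaf c => exact ⟨c, Finset.mem_singleton_self c⟩
  | node l r ihl ihr =>
    simp only [fitchF]
    split
    · assumption
    · exact Finset.Nonempty.mono Finset.subset_union_left ihl

theorem fitch_side {σ : Type} [DecidableEq σ] {l : BTree σ} {a : LTree σ} {c : σ}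
    (h : fitchM l + (if a.rootChar ∈ fitchF l then 0 else 1) ≤ a.cost)
    (hc : c ∉ fitchF l) :
    fitchM l + 1 ≤ a.cost + (if a.rootChar = c then 0 else 1) := by
  by_cases hac : a.rootChar = c
  · rw [if_pos hac]; rw [hac, if_neg hc] at h; omega
  · rw [if_neg hac]
    have : fitchM l ≤ a.cost := le_trans (Nat.le_add_right _ _) h
    omega

theorem fitch_key {σ : Type} [DecidableEq σ] (t : BTree σ) :
    (∀ e : LTree σ, Extends e t →
      fitchM t + (if e.rootChar ∈ fitchF t then 0 else 1) ≤ e.cost) ∧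
    (∀ c ∈ fitchF t, ∃ e : LTree σ, Extends e t ∧ e.rootChar = c ∧ e.cost = fitchM t) := by
  induction t with
  | leaf c =>
    constructor
    · intro e he
      cases he
      simp [fitchM, fitchF, LTree.rootChar, LTree.cost]
    · intro d hd
      simp only [fitchF, Finset.mem_singleton] at hd
      subst hd
      exact ⟨.leaf d, .leaf d, rfl, rfl⟩
  | node l r ihl ihr =>
    obtain ⟨lbl, ubl⟩ := ihl
    obtain ⟨lbr, ubr⟩ := ihr
    constructor
    · intro e he
      cases he with
      | @node c a _ b _ ha hb =>
        have hal := lbl a ha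
        have hbr := lbr b hb
        have hal0 : fitchM l ≤ a.cost := le_trans (Nat.le_add_right _ _) hal
        have hbr0 : fitchM r ≤ b.cost := le_trans (Nat.le_add_right _ _) hbr
        simp only [fitchM, fitchF, LTree.cost]
        rw [show (LTree.node c a b).rootChar = c from rfl]
        by_cases hP : (fitchF l ∩ fitchF r).Nonempty
        · simp only [if_pos hP]
          by_cases hc : c ∈ fitchF l ∩ fitchF r
          · rw [if_pos hc]; omega
          · rw [if_neg hc]
            have hor : c ∉ fitchF l ∨ c ∉ fitchF r := by
              by_contra hcon
              push_neg at hcon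
              exact hc (Finset.mem_inter.2 ⟨hcon.1, hcon.2⟩)
            rcases hor with hcl | hcr
            · have := fitch_side hal hcl; omega
            · have := fitch_side hbr hcr; omega
        · simp only [if_neg hP]
          by_cases hc : c ∈ fitchF l ∪ fitchF r
          · rw [if_pos hc]
            by_cases haF : a.rootChar ∈ fitchF l
            · by_cases hbF : b.rootChar ∈ fitchF r
              · have hne : a.rootChar ≠ b.rootChar := fun h =>
                  hP ⟨a.rootChar, Finset.mem_inter.2 ⟨haF, h ▸ hbF⟩⟩
                have h1 : 1 ≤ (if a.rootChar = c then 0 else 1) +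
                    (if b.rootChar = c then 0 else 1) := by
                  by_cases hac : a.rootChar = c
                  · rw [if_pos hac, if_neg (fun hbc => hne (hac.trans hbc.symm))]
                  · rw [if_neg hac]; omega
                omega
              · rw [if_neg hbF] at hbr; omega
            · rw [if_neg haF] at hal; omega
          · rw [if_neg hc]
            simp only [Finset.mem_union, not_or] at hc
            have h1 := fitch_side hal hc.1
            have h2 := fitch_side hbr hc.2
            omega
    · intro c hc
      simp only [fitchF] at hc
      by_cases hP : (fitchF l ∩ fitchF r).Nonempty
      · rw [if_pos hP] at hc
        obtain ⟨hcl, hcr⟩ := Finset.mem_inter.1 hc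
        obtain ⟨ea, hea, hra, hca⟩ := ubl c hcl
        obtain ⟨eb, heb, hrb, hcb⟩ := ubr c hcr
        refine ⟨.node c ea eb, Extends.node c hea heb, rfl, ?_⟩
        simp [LTree.cost, fitchM, hra, hrb, hca, hcb, hP]
      · rw [if_neg hP] at hc
        rcases Finset.mem_union.1 hc with hcl | hcr
        · obtain ⟨ea, hea, hra, hca⟩ := ubl c hcl
          obtain ⟨d, hd⟩ := fitchF_nonempty r
          obtain ⟨eb, heb, hrb, hcb⟩ := ubr d hd
          have hdc : d ≠ c := fun h => hP ⟨c, Finset.mem_inter.2 ⟨hcl, h ▸ hd⟩⟩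
          refine ⟨.node c ea eb, Extends.node c hea heb, rfl, ?_⟩
          simp [LTree.cost, fitchM, hra, hrb, hca, hcb, hdc, hP]
        · obtain ⟨eb, heb, hrb, hcb⟩ := ubr c hcr
          obtain ⟨d, hd⟩ := fitchF_nonempty l
          obtain ⟨ea, hea, hra, hca⟩ := ubl d hd
          have hdc : d ≠ c := fun h => hP ⟨c, Finset.mem_inter.2 ⟨h ▸ hd, hcr⟩⟩
          refine ⟨.node c ea eb, Extends.node c hea heb, rfl, ?_⟩
          simp [LTree.cost, fitchM, hra, hrb, hca, hcb, hdc, hP]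

/-- Correctness of the single-site Fitch algorithm: `fitchM` at the root is the minimum
number of character changes over all internal assignments, and `fitchF` at the root is
exactly the set of root characters achieving this minimum. -/
theorem stmt11 {σ : Type} [Fintype σ] [DecidableEq σ] (t : BTree σ) :
    (∀ e : LTree σ, Extends e t → fitchM t ≤ e.cost) ∧
    (∃ e : LTree σ, Extends e t ∧ e.cost = fitchM t) ∧
    (∀ c : σ, c ∈ fitchF t ↔
      ∃ e : LTree σ, Extends e t ∧ e.rootChar = c ∧ e.cost = fitchM t) := by
  obtain ⟨lb, ub⟩ := fitch_key t
  refine ⟨fun e he => le_trans (Nat.le_add_right _ _) (lb e he), ?_, ?_⟩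
  · obtain ⟨c, hc⟩ := fitchF_nonempty t
    obtain ⟨e, he, _, hce⟩ := ub c hc
    exact ⟨e, he, hce⟩
  · intro c
    constructor
    · intro hc; exact ub c hc
    · rintro ⟨e, he, hre, hce⟩
      by_contra hc
      have := lb e he
      rw [hre, if_neg hc] at this
      omega
end

section
/- Reward determined by root feature: for a fully built weighted rooted tree (z,b) on n leaves with m sites, the product over sites of the uniform-root-distribution inner product with the tree feature reproduces the reward: ∏_i (Σ_c π(c)·ρ_root^i[c]) = P(b) · P(Y|z,b) = R(z,b), where ρ is the Felsenstein feature scaled by branch-length priors as ρ^i = f_root^i · ∏_e P(b(e))^{1/m}. Consequently, if two forests share the same features and the same action sequence is applied to both until completion, the resulting trees have equal reward. -/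
inductive WTree (σ : Type) (m : ℕ) where
  | leaf : (Fin m → σ) → WTree σ m
  | node : WTree σ m → ℝ → WTree σ m → ℝ → WTree σ m

variable {σ : Type} [Fintype σ] [DecidableEq σ] {m : ℕ}

noncomputable def feln (Psub : ℝ → σ → σ → ℝ) : WTree σ m → Fin m → σ → ℝ
  | .leaf y => fun i c => if y i = c then 1 else 0
  | .node l bl r br => fun i c =>
      (∑ k : σ, Psub bl c k * feln Psub l i k) * (∑ k : σ, Psub br c k * feln Psub r i k)

noncomputable def priorProd (Pb : ℝ → ℝ) : WTree σ m → ℝ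
  | .leaf _ => 1
  | .node l bl r br => Pb bl * Pb br * priorProd Pb l * priorProd Pb r

/-- PhyloGFN tree feature: `ρ^i = f_root^i · (∏_e P(b(e)))^{1/m}`. -/
noncomputable def feat (Psub : ℝ → σ → σ → ℝ) (Pb : ℝ → ℝ) (t : WTree σ m) :
    Fin m → σ → ℝ :=
  fun i c => feln Psub t i c * (priorProd Pb t) ^ ((1 : ℝ) / m)

/-- The reward of a weighted tree: `R(z,b) = P(b)·P(Y|z,b)` where the likelihood is the
product over sites of the uniform root distribution paired with the root Felsenstein
vector. -/
noncomputable def rewardW (Psub : ℝ → σ → σ → ℝ) (Pb : ℝ → ℝ) (t : WTree σ m) : ℝ :=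
  priorProd Pb t * ∏ i : Fin m, ∑ c : σ, (1 / (Fintype.card σ : ℝ)) * feln Psub t i c

def joinAtW (s : List (WTree σ m)) (i j : ℕ) (bi bj : ℝ) :
    Option (List (WTree σ m)) :=
  if i < j then
    match s[i]?, s[j]? with
    | some ti, some tj => some (((s.eraseIdx j).eraseIdx i) ++ [WTree.node ti bi tj bj])
    | _, _ => none
  else none

def applyJoinsW : List (ℕ × ℕ × ℝ × ℝ) → List (WTree σ m) → Option (List (WTree σ m))
  | [], s => some s
  | (i, j, bi, bj) :: rest, s =>
    match joinAtW s i j bi bj with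
    | some s' => applyJoinsW rest s'
    | none => none

lemma priorProd_nonneg (Pb : ℝ → ℝ) (hPb : ∀ b, 0 ≤ Pb b) :
    ∀ t : WTree σ m, 0 ≤ priorProd Pb t := by
  intro t
  induction t with
  | leaf y => simp [priorProd]
  | node l bl r br ihl ihr =>
      exact mul_nonneg (mul_nonneg (mul_nonneg (hPb bl) (hPb br)) ihl) ihr

lemma prod_feat_eq_reward (hm : 1 ≤ m) (Psub : ℝ → σ → σ → ℝ) (Pb : ℝ → ℝ)
    (hPb : ∀ b, 0 ≤ Pb b) (t : WTree σ m) :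
    (∏ i : Fin m, ∑ c : σ, (1 / (Fintype.card σ : ℝ)) * feat Psub Pb t i c) =
      rewardW Psub Pb t := by
  have hP := priorProd_nonneg Pb hPb t
  have hm' : (m : ℝ) ≠ 0 := Nat.cast_ne_zero.mpr (by omega)
  unfold feat rewardW
  simp_rw [← mul_assoc, ← Finset.sum_mul, Finset.prod_mul_distrib, Finset.prod_const,
    Finset.card_univ, Fintype.card_fin]
  rw [← Real.rpow_natCast (priorProd Pb t ^ ((1 : ℝ) / m)) m, ← Real.rpow_mul hP,
    one_div_mul_cancel hm', Real.rpow_one, mul_comm]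

lemma feat_node (Psub : ℝ → σ → σ → ℝ) (Pb : ℝ → ℝ) (hPb : ∀ b, 0 ≤ Pb b)
    (l r : WTree σ m) (bl br : ℝ) :
    feat Psub Pb (WTree.node l bl r br) = fun i c =>
      (∑ k : σ, Psub bl c k * feat Psub Pb l i k) *
        (∑ k : σ, Psub br c k * feat Psub Pb r i k) * (Pb bl * Pb br) ^ ((1 : ℝ) / m) := by
  funext i c
  have hl := priorProd_nonneg Pb hPb l
  have hr := priorProd_nonneg Pb hPb r
  unfold feat
  show (∑ k : σ, Psub bl c k * feln Psub l i k) * (∑ k : σ, Psub br c k * feln Psub r i k) *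
      (Pb bl * Pb br * priorProd Pb l * priorProd Pb r) ^ ((1 : ℝ) / m) = _
  simp_rw [← mul_assoc, ← Finset.sum_mul]
  rw [Real.mul_rpow (mul_nonneg (mul_nonneg (hPb bl) (hPb br)) hl) hr,
    Real.mul_rpow (mul_nonneg (hPb bl) (hPb br)) hl]
  ring

lemma feat_node_congr (Psub : ℝ → σ → σ → ℝ) (Pb : ℝ → ℝ) (hPb : ∀ b, 0 ≤ Pb b)
    {l l' r r' : WTree σ m} (bl br : ℝ)
    (hl : feat Psub Pb l = feat Psub Pb l') (hr : feat Psub Pb r = feat Psub Pb r') :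
    feat Psub Pb (WTree.node l bl r br) = feat Psub Pb (WTree.node l' bl r' br) := by
  rw [feat_node Psub Pb hPb, feat_node Psub Pb hPb, hl, hr]

lemma forall2_eraseIdx {α β : Type*} {R : α → β → Prop} :
    ∀ {l₁ : List α} {l₂ : List β}, List.Forall₂ R l₁ l₂ →
      ∀ n, List.Forall₂ R (l₁.eraseIdx n) (l₂.eraseIdx n) := by
  intro l₁ l₂ h
  induction h with
  | nil => intro n; simp
  | cons ha hl ih =>
      intro n
      cases n with
      | zero => simpa using hl
      | succ n => simpa using List.Forall₂.cons ha (ih n)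

lemma forall2_getElem? {α β : Type*} {R : α → β → Prop} :
    ∀ {l₁ : List α} {l₂ : List β}, List.Forall₂ R l₁ l₂ →
      ∀ (n : ℕ) (a : α), l₁[n]? = some a → ∃ b, l₂[n]? = some b ∧ R a b := by
  intro l₁ l₂ h
  induction h with
  | nil => intro n a ha; simp at ha
  | cons hab hl ih =>
      intro n a ha
      cases n with
      | zero => simp at ha; subst ha; exact ⟨_, by simp, hab⟩
      | succ n =>
          obtain ⟨b, hb, hrb⟩ := ih n a (by simpa using ha)
          exact ⟨b, by simpa using hb, hrb⟩

lemma forall2_of_map {α β γ : Type*} {f : α → γ} {g : β → γ} :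
    ∀ (l₁ : List α) (l₂ : List β), l₁.length = l₂.length →
      (∀ k : ℕ, (l₁[k]?).map f = (l₂[k]?).map g) →
      List.Forall₂ (fun a b => f a = g b) l₁ l₂ := by
  intro l₁
  induction l₁ with
  | nil =>
      intro l₂ hlen _
      cases l₂ with
      | nil => exact List.Forall₂.nil
      | cons b t => simp at hlen
  | cons a t ih =>
      intro l₂ hlen hmap
      cases l₂ with
      | nil => simp at hlen
      | cons b t₂ =>
          refine List.Forall₂.cons ?_ (ih t₂ (by simpa using hlen) fun k => ?_)
          · have := hmap 0; simpa using this
          · have := hmap (k + 1); simpa using this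

lemma joinAt_rel (Psub : ℝ → σ → σ → ℝ) (Pb : ℝ → ℝ) (hPb : ∀ b, 0 ≤ Pb b)
    {s₁ s₂ : List (WTree σ m)}
    (h : List.Forall₂ (fun a b => feat Psub Pb a = feat Psub Pb b) s₁ s₂)
    {i j : ℕ} {bi bj : ℝ} {s₁' : List (WTree σ m)}
    (hj : joinAtW s₁ i j bi bj = some s₁') :
    ∃ s₂', joinAtW s₂ i j bi bj = some s₂' ∧
      List.Forall₂ (fun a b => feat Psub Pb a = feat Psub Pb b) s₁' s₂' := by
  unfold joinAtW at hj ⊢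
  split at hj
  · rename_i hij
    rw [if_pos hij]
    cases hti : s₁[i]? with
    | none => rw [hti] at hj; simp at hj
    | some ti =>
      cases htj : s₁[j]? with
      | none => rw [hti, htj] at hj; simp at hj
      | some tj =>
        rw [hti, htj] at hj
        obtain ⟨ti', hti', hrti⟩ := forall2_getElem? h i ti hti
        obtain ⟨tj', htj', hrtj⟩ := forall2_getElem? h j tj htj
        rw [hti', htj']
        refine ⟨_, rfl, ?_⟩
        have hs : s₁' = ((s₁.eraseIdx j).eraseIdx i) ++ [WTree.node ti bi tj bj] := by
          simpa using hj.symm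
        subst hs
        exact List.rel_append (forall2_eraseIdx (forall2_eraseIdx h j) i)
          (List.Forall₂.cons (feat_node_congr Psub Pb hPb bi bj hrti hrtj)
            List.Forall₂.nil)
  · simp at hj

lemma applyJoins_rel (Psub : ℝ → σ → σ → ℝ) (Pb : ℝ → ℝ) (hPb : ∀ b, 0 ≤ Pb b) :
    ∀ (a : List (ℕ × ℕ × ℝ × ℝ)) (s₁ s₂ out₁ : List (WTree σ m)),
      List.Forall₂ (fun a b => feat Psub Pb a = feat Psub Pb b) s₁ s₂ →
      applyJoinsW a s₁ = some out₁ →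
      ∃ out₂, applyJoinsW a s₂ = some out₂ ∧
        List.Forall₂ (fun a b => feat Psub Pb a = feat Psub Pb b) out₁ out₂ := by
  intro a
  induction a with
  | nil =>
      intro s₁ s₂ out₁ h h1
      simp [applyJoinsW] at h1
      exact ⟨s₂, rfl, h1 ▸ h⟩
  | cons hd tl ih =>
      intro s₁ s₂ out₁ h h1
      obtain ⟨i, j, bi, bj⟩ := hd
      unfold applyJoinsW at h1 ⊢
      cases hjn : joinAtW s₁ i j bi bj with
      | none => rw [hjn] at h1; simp at h1
      | some s₁' =>
        rw [hjn] at h1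
        obtain ⟨s₂', hj₂, h'⟩ := joinAt_rel Psub Pb hPb h hjn
        rw [hj₂]
        exact ih s₁' s₂' out₁ h' h1

/-- Reward is determined by the root feature: the product over sites of the uniform-root
inner product with the tree feature reproduces the reward `P(b)·P(Y|z,b)`; consequently,
two forests sharing the same features yield equal-reward trees under any common action
sequence applied until completion. -/
theorem stmt15 (hm : 1 ≤ m) (Psub : ℝ → σ → σ → ℝ) (Pb : ℝ → ℝ) (hPb : ∀ b, 0 ≤ Pb b) :
    (∀ t : WTree σ m,
      (∏ i : Fin m, ∑ c : σ, (1 / (Fintype.card σ : ℝ)) * feat Psub Pb t i c) =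
        rewardW Psub Pb t) ∧
    (∀ s₁ s₂ : List (WTree σ m), s₁.length = s₂.length →
      (∀ k : ℕ, (s₁[k]?).map (feat Psub Pb) = (s₂[k]?).map (feat Psub Pb)) →
      ∀ (a : List (ℕ × ℕ × ℝ × ℝ)) (x x' : WTree σ m),
        applyJoinsW a s₁ = some [x] → applyJoinsW a s₂ = some [x'] →
        rewardW Psub Pb x = rewardW Psub Pb x') := by
  refine ⟨prod_feat_eq_reward hm Psub Pb hPb, ?_⟩
  intro s₁ s₂ hlen hmap a x x' h1 h2
  have h := forall2_of_map s₁ s₂ hlen hmap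
  obtain ⟨out₂, hout₂, hrel⟩ := applyJoins_rel Psub Pb hPb a s₁ s₂ [x] h h1
  rw [h2] at hout₂
  obtain rfl : out₂ = [x'] := by simpa using hout₂.symm
  have hfx : feat Psub Pb x = feat Psub Pb x' := by
    cases hrel with
    | cons h _ => exact h
  rw [← prod_feat_eq_reward hm Psub Pb hPb x, ← prod_feat_eq_reward hm Psub Pb hPb x', hfx]
end
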